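/- Let ∂ : G₁ → G₀ be a crossed module, let P be a nonempty set with a free and transitive right G₁-action, and let s : P → G₀ be equivariant: s(p g) = s(p) ∂(g) for all p ∈ P, g ∈ G₁. Define g · p := p · g^{s(p)}. Then this defines a left action of G₁ on P (i.e., 1 · p = p and g · (g' · p) = (g g') · p), and the left and right actions commute: (g · p) · g' = g · (p · g') for all g, g' ∈ G₁, p ∈ P. Hence P is a G₁-bitorsor. -/
import Mathlib


theorem stmt_16 {G₁ G₀ : Type*} [Group G₁] [Group G₀] (d : G₁ →* G₀) (act : G₁ → G₀ → G₁)
    (hact_one : ∀ g, act g 1 = g)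
    (hact_mul : ∀ g x y, act g (x * y) = act (act g x) y)
    (hact_hom : ∀ g g' x, act (g * g') x = act g x * act g' x)
    (hact_d : ∀ g x, d (act g x) = x⁻¹ * d g * x)
    (hact_peiffer : ∀ g h, act g (d h) = h⁻¹ * g * h)
    {P : Type*} (hP : Nonempty P)
    (r : P → G₁ → P)
    (hr_one : ∀ p, r p 1 = p)
    (hr_mul : ∀ p g g', r (r p g) g' = r p (g * g'))
    (hfree : ∀ p g, r p g = p → g = 1)
    (htrans : ∀ p q : P, ∃ g, r p g = q)
    (s : P → G₀) (hs : ∀ p g, s (r p g) = s p * d g) :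
    let l : G₁ → P → P := fun g p => r p (act g (s p))
    (∀ p, l 1 p = p) ∧
      (∀ g g' p, l g (l g' p) = l (g * g') p) ∧
      (∀ g g' p, r (l g p) g' = l g (r p g')) := by
  intro l
  have hact1 : ∀ x : G₀, act 1 x = 1 := by
    intro x
    have h := hact_hom 1 1 x
    simp at h
    exact h
  refine ⟨?_, ?_, ?_⟩
  · intro p
    simp [l, hact1, hr_one]
  · intro g g' p
    simp only [l, hr_mul, hs, hact_mul, hact_peiffer, hact_hom]
    group
  · intro g g' p
    simp only [l, hr_mul, hs, hact_mul, hact_peiffer]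
    group
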